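/- arXiv:1705.00327 — 2 statements merged into one kernel-verified Lean document; each statement's English description precedes it below -/
import Mathlib

section
/- Let G = (V, E, w) be a weighted undirected graph with positive edge weights, let k ≥ 1 and r ≥ 2 be integers, and let H be the Thorup–Zwick-style hopset built from a hierarchy V = V_0 ⊇ V_1 ⊇ ⋯ ⊇ V_k ⊇ V_{k+1} = ∅ with pivots and bunches as defined below. Define h_0 = 1 and h_i = (r+1)·h_{i−1} + r for i ∈ [1, k]. Then for any fixed real μ > 0, for all i ∈ [0, k] and any pair u, v ∈ V with dist_G(u, v) ≤ r^i·μ, at least one of the following holds: (i) dist_{G∪H}^{(h_i)}(u, v) ≤ dist_G(u, v) + ((r+4)^i − r^i)·μ; (ii) there exists u' ∈ V_{i+1} such that dist_{G∪H}^{(h_i)}(u, u') ≤ (r+4)^i·μ. -/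
open scoped ENNReal
open Classical

/-- Hop-bounded distance: minimum total weight of a walk with at most `β` edges. -/
noncomputable def hopDist {V : Type*} (w : V → V → ℝ≥0∞) : ℕ → V → V → ℝ≥0∞
  | 0, u, v => if u = v then 0 else ⊤
  | β + 1, u, v => hopDist w β u v ⊓ ⨅ x, w u x + hopDist w β x v

/-- Shortest-path distance (infimum over all hop bounds). -/
noncomputable def gdist {V : Type*} (w : V → V → ℝ≥0∞) (u v : V) : ℝ≥0∞ :=
  ⨅ β, hopDist w β u v

/-- The graph `G ∪ H`: add each edge of `H` with weight equal to the `G`-distance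
between its endpoints. -/
noncomputable def addShortcuts {V : Type*} (w : V → V → ℝ≥0∞) (H : Set (V × V)) :
    V → V → ℝ≥0∞ :=
  fun u v => w u v ⊓ (if (u, v) ∈ H ∨ (v, u) ∈ H then gdist w u v else ⊤)

/-- Distance from `v` to its level-`j` pivot `p j v`; by convention it is `⊤`
for `j = k+1` (the pivot `p (k+1) v` does not exist). -/
noncomputable def pivotDist {V : Type*} (w : V → V → ℝ≥0∞) (p : ℕ → V → V) (k : ℕ)
    (j : ℕ) (v : V) : ℝ≥0∞ :=
  if j ≤ k then gdist w v (p j v) else ⊤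

/-- The Thorup–Zwick-style hopset: for each `i ∈ [0,k]` and each vertex `v` of level
exactly `i` (i.e. `v ∈ Vs i \ Vs (i+1)`), add the edges from `v` to all vertices of its
bunch `B(v) = {u ∈ Vs i : dist(v,u) < dist(v, p (i+1) v)}` and (when `i < k`) to its
pivot `p (i+1) v`. -/
def tzHopset {V : Type*} (w : V → V → ℝ≥0∞) (Vs : ℕ → Set V) (p : ℕ → V → V) (k : ℕ) :
    Set (V × V) :=
  { e | ∃ i ≤ k, e.1 ∈ Vs i ∧ e.1 ∉ Vs (i + 1) ∧
        ((e.2 ∈ Vs i ∧ gdist w e.1 e.2 < pivotDist w p k (i + 1) e.1) ∨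
          (i < k ∧ e.2 = p (i + 1) e.1)) }

/-- The hopcount sequence `h_0 = 1`, `h_i = (r+1)·h_{i-1} + r`. -/
def hopSeq (r : ℕ) : ℕ → ℕ
  | 0 => 1
  | i + 1 => (r + 1) * hopSeq r i + r


open scoped NNReal

namespace TZAux

variable {V : Type*}

lemma iInf_attained [Fintype V] [Nonempty V] (f : V → ℝ≥0∞) : ∃ x, (⨅ y, f y) = f x := by
  obtain ⟨x, -, hx⟩ := Finset.exists_min_image Finset.univ f ⟨Classical.arbitrary V, Finset.mem_univ _⟩
  exact ⟨x, le_antisymm (iInf_le _ x) (le_iInf fun y => hx y (Finset.mem_univ y))⟩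

lemma hopDist_succ (w : V → V → ℝ≥0∞) (β : ℕ) (u v : V) :
    hopDist w (β + 1) u v = hopDist w β u v ⊓ ⨅ x, w u x + hopDist w β x v := rfl

lemma hopDist_zero_self (w : V → V → ℝ≥0∞) (v : V) : hopDist w 0 v v = 0 := by
  simp [hopDist]

lemma hopDist_anti (w : V → V → ℝ≥0∞) (u v : V) {β γ : ℕ} (h : β ≤ γ) :
    hopDist w γ u v ≤ hopDist w β u v := by
  induction γ with
  | zero => simp_all
  | succ γ ih =>
    rcases Nat.eq_or_lt_of_le h with rfl | h
    · exact le_rfl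
    · exact le_trans inf_le_left (ih (by omega))

lemma hopDist_self (w : V → V → ℝ≥0∞) (β : ℕ) (v : V) : hopDist w β v v = 0 :=
  le_antisymm ((hopDist_anti w v v (Nat.zero_le β)).trans_eq (hopDist_zero_self w v)) (zero_le)

lemma hopDist_triangle (w : V → V → ℝ≥0∞) (β₁ β₂ : ℕ) (u x v : V) :
    hopDist w (β₁ + β₂) u v ≤ hopDist w β₁ u x + hopDist w β₂ x v := by
  induction β₁ generalizing u with
  | zero =>
    by_cases h : u = x
    · subst h; simp [hopDist_zero_self]
    · simp [hopDist, h]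
  | succ β₁ ih =>
    have hN : Nonempty V := ⟨u⟩
    have e : β₁ + 1 + β₂ = (β₁ + β₂) + 1 := by omega
    rw [e, hopDist_succ, hopDist_succ]
    rcases le_total (hopDist w β₁ u x) (⨅ y, w u y + hopDist w β₁ y x) with hc | hc
    · rw [inf_eq_left.2 hc]
      exact le_trans inf_le_left (ih u)
    · rw [inf_eq_right.2 hc]
      refine le_trans inf_le_right ?_
      rw [ENNReal.iInf_add]
      refine le_iInf fun y => iInf_le_of_le y ?_
      calc w u y + hopDist w (β₁ + β₂) y v
          ≤ w u y + (hopDist w β₁ y x + hopDist w β₂ x v) := add_le_add_right (ih y) _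
        _ = w u y + hopDist w β₁ y x + hopDist w β₂ x v := (add_assoc _ _ _).symm

lemma gdist_le_hopDist (w : V → V → ℝ≥0∞) (β : ℕ) (u v : V) :
    gdist w u v ≤ hopDist w β u v := iInf_le _ β

lemma gdist_self (w : V → V → ℝ≥0∞) (v : V) : gdist w v v = 0 :=
  le_antisymm ((gdist_le_hopDist w 0 v v).trans_eq (hopDist_zero_self w v)) (zero_le)

lemma hopDist_one_le (w : V → V → ℝ≥0∞) (u v : V) : hopDist w 1 u v ≤ w u v := by
  refine le_trans inf_le_right (iInf_le_of_le v ?_)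
  simp [hopDist_zero_self]

lemma gdist_le_w (w : V → V → ℝ≥0∞) (u v : V) : gdist w u v ≤ w u v :=
  (gdist_le_hopDist w 1 u v).trans (hopDist_one_le w u v)

lemma gdist_triangle (w : V → V → ℝ≥0∞) (u x v : V) :
    gdist w u v ≤ gdist w u x + gdist w x v := by
  unfold gdist
  rw [ENNReal.iInf_add]
  refine le_iInf fun β₁ => ?_
  rw [ENNReal.add_iInf]
  refine le_iInf fun β₂ => ?_
  exact le_trans (iInf_le _ (β₁ + β₂)) (hopDist_triangle w β₁ β₂ u x v)


/-- weight of the walk starting at `x` passing through `t`. -/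
noncomputable def wW (w : V → V → ℝ≥0∞) : V → List V → ℝ≥0∞
  | _, [] => 0
  | x, z :: t => w x z + wW w z t

lemma wW_append (w : V → V → ℝ≥0∞) (t₁ t₂ : List V) (x : V) :
    wW w x (t₁ ++ t₂) = wW w x t₁ + wW w (t₁.getLastD x) t₂ := by
  induction t₁ generalizing x with
  | nil => simp [wW]
  | cons z t₁ ih =>
    show w x z + wW w z (t₁ ++ t₂) = (w x z + wW w z t₁) + wW w ((z :: t₁).getLastD x) t₂
    rw [ih z, List.getLastD_cons, add_assoc]

lemma hopDist_le_wW (w : V → V → ℝ≥0∞) (t : List V) (x : V) :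
    hopDist w t.length x (t.getLastD x) ≤ wW w x t := by
  induction t generalizing x with
  | nil => simpa [wW] using (hopDist_zero_self w x).le
  | cons z t ih =>
    show hopDist w (t.length + 1) x ((z :: t).getLastD x) ≤ _
    rw [List.getLastD_cons]
    refine le_trans inf_le_right (le_trans (iInf_le _ z) ?_)
    exact add_le_add_right (ih z) _

lemma gdist_le_wW (w : V → V → ℝ≥0∞) (t : List V) (x : V) :
    gdist w x (t.getLastD x) ≤ wW w x t :=
  (gdist_le_hopDist w t.length x _).trans (hopDist_le_wW w t x)

lemma exists_walk [Fintype V] (w : V → V → ℝ≥0∞) (β : ℕ) (u v : V)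
    (h : hopDist w β u v ≠ ⊤) :
    ∃ t : List V, t.length ≤ β ∧ t.getLastD u = v ∧ wW w u t = hopDist w β u v := by
  induction β generalizing u with
  | zero =>
    by_cases huv : u = v
    · subst huv; exact ⟨[], le_rfl, rfl, by simp [wW, hopDist_zero_self]⟩
    · simp [hopDist, huv] at h
  | succ β ih =>
    have hN : Nonempty V := ⟨u⟩
    rw [hopDist_succ] at h ⊢
    rcases le_total (hopDist w β u v) (⨅ x, w u x + hopDist w β x v) with hc | hc
    · rw [inf_eq_left.2 hc] at h ⊢
      obtain ⟨t, h1, h2, h3⟩ := ih u h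
      exact ⟨t, h1.trans (Nat.le_succ β), h2, h3⟩
    · rw [inf_eq_right.2 hc] at h ⊢
      obtain ⟨x₀, hx₀⟩ := iInf_attained (fun x => w u x + hopDist w β x v)
      rw [hx₀] at h ⊢
      have hfin : hopDist w β x₀ v ≠ ⊤ := fun ht => h (by simp [ht])
      obtain ⟨t, h1, h2, h3⟩ := ih x₀ hfin
      exact ⟨x₀ :: t, by simpa using h1, by rw [List.getLastD_cons]; exact h2,
        by simp [wW, h3]⟩

lemma wW_reverse (w : V → V → ℝ≥0∞) (hw : ∀ a b, w a b = w b a) (t : List V) (x : V) :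
    wW w (t.getLastD x) ((x :: t).reverse.tail) = wW w x t ∧
      ((x :: t).reverse.tail).getLastD (t.getLastD x) = x := by
  induction t generalizing x with
  | nil => simp [wW]
  | cons z t ih =>
    obtain ⟨ih1, ih2⟩ := ih z
    have hrev : (z :: t).reverse ≠ [] := by simp
    have htail : ((x :: z :: t).reverse).tail = ((z :: t).reverse).tail ++ [x] := by
      rw [List.reverse_cons]
      exact List.tail_append_of_ne_nil hrev
    constructor
    · rw [List.getLastD_cons, htail, wW_append, ih1, ih2]
      show wW w z t + (w z x + 0) = w x z + wW w z t
      rw [hw z x, add_zero, add_comm]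
    · rw [List.getLastD_cons, htail]
      simp

lemma hopDist_comm [Fintype V] (w : V → V → ℝ≥0∞) (hw : ∀ a b, w a b = w b a) (β : ℕ)
    (u v : V) : hopDist w β u v = hopDist w β v u := by
  have key : ∀ a b : V, hopDist w β a b ≤ hopDist w β b a := by
    intro a b
    by_cases h : hopDist w β b a = ⊤
    · exact h ▸ le_top
    · obtain ⟨t, h1, h2, h3⟩ := exists_walk w β b a h
      obtain ⟨r1, r2⟩ := wW_reverse w hw t b
      rw [h2] at r1 r2
      calc hopDist w β a b ≤ hopDist w ((b :: t).reverse.tail).length a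
            (((b :: t).reverse.tail).getLastD a) := by
              rw [r2]
              exact hopDist_anti w a b (by simpa using h1)
        _ ≤ wW w a ((b :: t).reverse.tail) := hopDist_le_wW w _ a
        _ = hopDist w β b a := by rw [r1, h3]
  exact le_antisymm (key u v) (key v u)

lemma gdist_comm [Fintype V] (w : V → V → ℝ≥0∞) (hw : ∀ a b, w a b = w b a) (u v : V) :
    gdist w u v = gdist w v u :=
  iInf_congr fun β => hopDist_comm w hw β u v

section shortcuts
variable (w : V → V → ℝ≥0∞) (H : Set (V × V))

lemma gdist_le_addShortcuts (a b : V) : gdist w a b ≤ addShortcuts w H a b := by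
  refine le_inf (gdist_le_w w a b) ?_
  split
  · exact le_rfl
  · exact le_top

lemma addShortcuts_le_w (a b : V) : addShortcuts w H a b ≤ w a b := inf_le_left

lemma addShortcuts_le_gdist (a b : V) (h : (a, b) ∈ H ∨ (b, a) ∈ H) :
    addShortcuts w H a b ≤ gdist w a b := by
  refine le_trans inf_le_right ?_
  rw [if_pos h]

lemma addShortcuts_comm [Fintype V] (hw : ∀ a b, w a b = w b a) (a b : V) :
    addShortcuts w H a b = addShortcuts w H b a := by
  unfold addShortcuts
  rw [hw a b, gdist_comm w hw a b]
  congr 1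
  by_cases h : (a, b) ∈ H ∨ (b, a) ∈ H
  · rw [if_pos h, if_pos h.symm]
  · rw [if_neg h, if_neg fun hc => h hc.symm]

lemma gdist_le_hopDist_shortcut (β : ℕ) (x y : V) :
    gdist w x y ≤ hopDist (addShortcuts w H) β x y := by
  induction β generalizing x with
  | zero =>
    by_cases h : x = y
    · subst h; simp [gdist_self]
    · simp [hopDist, h]
  | succ β ih =>
    refine le_inf (ih x) (le_iInf fun z => ?_)
    calc gdist w x y ≤ gdist w x z + gdist w z y := gdist_triangle w x z y
      _ ≤ addShortcuts w H x z + hopDist (addShortcuts w H) β z y :=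
          add_le_add (gdist_le_addShortcuts w H x z) (ih z)

end shortcuts
lemma getLastD_append_cons (l r : List V) (z x : V) :
    (l ++ z :: r).getLastD x = r.getLastD z := by
  induction l generalizing x with
  | nil => exact List.getLastD_cons
  | cons a l ih => rw [List.cons_append, List.getLastD_cons, ih]

lemma split_walk (w : V → V → ℝ≥0∞) :
    ∀ (t : List V) (x : V) (B : ℝ≥0∞), B ≠ ⊤ →
    ∃ p rest, t = p ++ rest ∧ wW w x p ≤ B ∧
      ∀ z rest', rest = z :: rest' → B < wW w x p + w (p.getLastD x) z := by
  intro t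
  induction t with
  | nil => exact fun x B _ => ⟨[], [], rfl, by simp [wW], fun z r h => by cases h⟩
  | cons z t ih =>
    intro x B hB
    by_cases hzB : w x z ≤ B
    · have hzT : w x z ≠ ⊤ := fun h => hB (top_le_iff.1 (h ▸ hzB))
      obtain ⟨p', rest, he, h1, h2⟩ := ih z (B - w x z)
        ((lt_of_le_of_lt tsub_le_self (lt_top_iff_ne_top.2 hB)).ne)
      refine ⟨z :: p', rest, by rw [List.cons_append, he], ?_, ?_⟩
      · show w x z + wW w z p' ≤ B
        calc w x z + wW w z p' ≤ w x z + (B - w x z) := add_le_add_right h1 _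
          _ = B := add_tsub_cancel_of_le hzB
      · intro y rest' hr
        have := h2 y rest' hr
        rw [(ENNReal.sub_lt_iff_lt_right hzT hzB)] at this
        show B < w x z + wW w z p' + w ((z :: p').getLastD x) y
        rw [List.getLastD_cons]
        calc B < wW w z p' + w (p'.getLastD z) y + w x z := this
          _ = w x z + wW w z p' + w (p'.getLastD z) y := by ring
    · exact ⟨[], z :: t, rfl, by simp [wW], fun y r h => by
        cases h; simpa [wW] using lt_of_not_ge hzB⟩

/-- A segment: a "piece" from `a` to `b` of `gdist`-cost at most `c`, followed by
an edge from `b` to `z`. -/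
structure Seg (V : Type*) where
  a : V
  b : V
  z : V
  c : ℝ≥0∞

def chainOK (w : V → V → ℝ≥0∞) (L : ℝ≥0∞) : V → List (Seg V) → Prop
  | _, [] => True
  | s, σ :: rest => σ.a = s ∧ gdist w σ.a σ.b ≤ σ.c ∧ σ.c ≤ L ∧ chainOK w L σ.z rest

noncomputable def chainW (w : V → V → ℝ≥0∞) : List (Seg V) → ℝ≥0∞
  | [] => 0
  | σ :: rest => σ.c + w σ.b σ.z + chainW w rest

def chainEnd : V → List (Seg V) → V
  | s, [] => s
  | _, σ :: rest => chainEnd σ.z rest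

lemma chainEnd_append (s : V) (l₁ l₂ : List (Seg V)) :
    chainEnd s (l₁ ++ l₂) = chainEnd (chainEnd s l₁) l₂ := by
  induction l₁ generalizing s with
  | nil => rfl
  | cons σ l ih => exact ih σ.z

lemma chainW_append (w : V → V → ℝ≥0∞) (l₁ l₂ : List (Seg V)) :
    chainW w (l₁ ++ l₂) = chainW w l₁ + chainW w l₂ := by
  induction l₁ with
  | nil => simp [chainW]
  | cons σ l ih => show _ + _ + chainW w (l ++ l₂) = _; rw [ih]; show _ = σ.c + w σ.b σ.z + chainW w l + chainW w l₂; ring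

lemma chainOK_append (w : V → V → ℝ≥0∞) (L : ℝ≥0∞) (s : V) (l₁ l₂ : List (Seg V))
    (h : chainOK w L s (l₁ ++ l₂)) :
    chainOK w L s l₁ ∧ chainOK w L (chainEnd s l₁) l₂ := by
  induction l₁ generalizing s with
  | nil => exact ⟨trivial, h⟩
  | cons σ l ih =>
    obtain ⟨h1, h2, h3, h4⟩ := h
    obtain ⟨g1, g2⟩ := ih σ.z h4
    exact ⟨⟨h1, h2, h3, g1⟩, g2⟩

lemma gdist_le_chain (w : V → V → ℝ≥0∞) (L : ℝ≥0∞) :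
    ∀ (l : List (Seg V)) (s : V), chainOK w L s l → gdist w s (chainEnd s l) ≤ chainW w l := by
  intro l
  induction l with
  | nil => intro s _; simp [chainEnd, chainW, gdist_self]
  | cons σ l ih =>
    intro s h
    obtain ⟨h1, h2, h3, h4⟩ := h
    subst h1
    calc gdist w σ.a (chainEnd σ.z l)
        ≤ gdist w σ.a σ.z + gdist w σ.z (chainEnd σ.z l) := gdist_triangle w _ _ _
      _ ≤ (gdist w σ.a σ.b + gdist w σ.b σ.z) + chainW w l :=
          add_le_add (gdist_triangle w _ _ _) (ih σ.z h4)
      _ ≤ (σ.c + w σ.b σ.z) + chainW w l :=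
          add_le_add_left (add_le_add h2 (gdist_le_w w _ _)) _
      _ = chainW w (σ :: l) := rfl

lemma decomp (w : V → V → ℝ≥0∞) (L : ℝ≥0∞) (hL : L ≠ ⊤) :
    ∀ (q : ℕ) (t : List V) (x : V), 1 ≤ q → wW w x t ≤ q * L →
    ∃ (segs : List (Seg V)) (cl : ℝ≥0∞),
      chainOK w L x segs ∧ gdist w (chainEnd x segs) (t.getLastD x) ≤ cl ∧ cl ≤ L ∧
      chainW w segs + cl ≤ wW w x t ∧ segs.length + 1 ≤ q := by
  intro q
  induction q with
  | zero => omega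
  | succ q ih =>
    intro t x _ hW
    obtain ⟨p, rest, he, h1, h2⟩ := split_walk w t x L hL
    match rest, he with
    | [], he =>
      rw [List.append_nil] at he
      subst he
      exact ⟨[], wW w x t, trivial, gdist_le_wW w t x, h1, by simp [chainW], by simp⟩
    | z :: rest', he =>
      subst he
      set y := p.getLastD x with hy
      have hmax : L < wW w x p + w y z := h2 z rest' rfl
      have htot : wW w x (p ++ z :: rest') = (wW w x p + w y z) + wW w z rest' := by
        rw [wW_append]
        show _ = _ + _ + wW w z rest'
        rw [add_assoc]
        rfl
      rw [htot] at hW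
      have hW' : (wW w x p + w y z) + wW w z rest' ≤ (q : ℝ≥0∞) * L + L := by
        refine hW.trans_eq ?_
        push_cast
        ring
      have hs0 : L ≤ wW w x p + w y z := hmax.le
      have hq1 : 1 ≤ q := by
        by_contra hq
        have hq0 : q = 0 := by omega
        subst hq0
        rw [Nat.cast_zero, zero_mul, zero_add] at hW'
        have : wW w x p + w y z ≤ L := le_trans (le_add_right le_rfl) hW'
        exact absurd (lt_of_lt_of_le hmax this) (lt_irrefl L)
      have hrest : wW w z rest' ≤ q * L := by
        have step1 : wW w z rest' + L ≤ q * L + L := by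
          calc wW w z rest' + L ≤ wW w z rest' + (wW w x p + w y z) := add_le_add_right hs0 _
            _ = (wW w x p + w y z) + wW w z rest' := by ring
            _ ≤ (q : ℝ≥0∞) * L + L := hW'
        exact (WithTop.add_le_add_iff_right hL).1 step1
      obtain ⟨segs', cl', c1, c2, c3, c4, c5⟩ := ih rest' z hq1 hrest
      refine ⟨⟨x, y, z, wW w x p⟩ :: segs', cl', ⟨rfl, gdist_le_wW w p x, h1, c1⟩, ?_, c3, ?_, by
        simpa using (by omega : segs'.length + 1 + 1 ≤ q + 1)⟩
      · show gdist w (chainEnd z segs') ((p ++ z :: rest').getLastD x) ≤ cl'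
        rw [getLastD_append_cons]
        exact c2
      · show (wW w x p + w y z) + chainW w segs' + cl' ≤ _
        rw [htot, add_assoc]
        exact add_le_add_right (c4) _

lemma hopSeq_pos (r : ℕ) (hr : 1 ≤ r) (i : ℕ) : 1 ≤ hopSeq r i := by
  induction i with
  | zero => exact le_rfl
  | succ i ih => show 1 ≤ (r+1) * hopSeq r i + r; nlinarith

lemma exists_first_bad {α : Type*} (P : α → Prop) :
    ∀ (l : List α), (¬ ∀ a ∈ l, P a) →
    ∃ l₁ a l₂, l = l₁ ++ a :: l₂ ∧ (∀ b ∈ l₁, P b) ∧ ¬ P a := by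
  intro l
  induction l with
  | nil => intro h; exact absurd (by simp) h
  | cons a l ih =>
    intro h
    by_cases ha : P a
    · have : ¬ ∀ b ∈ l, P b := fun hall => h (by
        intro b hb
        rcases List.mem_cons.1 hb with rfl | hb
        · exact ha
        · exact hall b hb)
      obtain ⟨l₁, b, l₂, he, h1, h2⟩ := ih this
      exact ⟨a :: l₁, b, l₂, by rw [he]; rfl, by
        intro c hc
        rcases List.mem_cons.1 hc with rfl | hc
        · exact ha
        · exact h1 c hc, h2⟩
    · exact ⟨[], a, l, rfl, by simp, ha⟩

lemma exists_last_bad {α : Type*} (P : α → Prop) (l : List α) (h : ¬ ∀ a ∈ l, P a) :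
    ∃ l₁ a l₂, l = l₁ ++ a :: l₂ ∧ ¬ P a ∧ ∀ b ∈ l₂, P b := by
  have hrev : ¬ ∀ a ∈ l.reverse, P a := fun hall => h fun a ha => hall a (List.mem_reverse.2 ha)
  obtain ⟨r₁, a, r₂, he, h1, h2⟩ := exists_first_bad P l.reverse hrev
  refine ⟨r₂.reverse, a, r₁.reverse, ?_, h2, fun b hb => h1 b (List.mem_reverse.1 hb)⟩
  have := congrArg List.reverse he
  rw [List.reverse_reverse] at this
  rw [this, List.reverse_append, List.reverse_cons, List.append_assoc]
  simp

lemma goodChain (w w' : V → V → ℝ≥0∞) (hle : ∀ a b, w' a b ≤ w a b)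
    (L D : ℝ≥0∞) (h : ℕ) :
    ∀ (segs : List (Seg V)) (s : V), chainOK w L s segs →
    (∀ σ ∈ segs, hopDist w' h σ.a σ.b ≤ gdist w σ.a σ.b + D) →
    hopDist w' (segs.length * (h + 1)) s (chainEnd s segs) ≤
      chainW w segs + (segs.length : ℝ≥0∞) * D := by
  intro segs
  induction segs with
  | nil => intro s _ _; simp [chainEnd, chainW, hopDist_self]
  | cons σ rest ih =>
    intro s hOK hGood
    obtain ⟨ha, hp, hc, hrest⟩ := hOK
    subst ha
    have hlen : (σ :: rest).length * (h + 1) = (h + 1) + rest.length * (h + 1) := by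
      simp [List.length_cons]; ring
    rw [hlen]
    have hedge : hopDist w' 1 σ.b σ.z ≤ w σ.b σ.z :=
      (hopDist_one_le w' σ.b σ.z).trans (hle σ.b σ.z)
    have hpiece : hopDist w' h σ.a σ.b ≤ σ.c + D :=
      (hGood σ (List.mem_cons_self)).trans (add_le_add_left hp D)
    calc hopDist w' ((h + 1) + rest.length * (h + 1)) σ.a (chainEnd σ.z rest)
        ≤ hopDist w' (h + 1) σ.a σ.z + hopDist w' (rest.length * (h+1)) σ.z (chainEnd σ.z rest) :=
          hopDist_triangle w' _ _ _ _ _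
      _ ≤ (hopDist w' h σ.a σ.b + hopDist w' 1 σ.b σ.z) +
            (chainW w rest + (rest.length : ℝ≥0∞) * D) :=
          add_le_add (hopDist_triangle w' h 1 _ _ _)
            (ih σ.z hrest fun τ hτ => hGood τ (List.mem_cons_of_mem σ hτ))
      _ ≤ ((σ.c + D) + w σ.b σ.z) + (chainW w rest + (rest.length : ℝ≥0∞) * D) :=
          add_le_add_left (add_le_add hpiece hedge) _
      _ = chainW w (σ :: rest) + ((σ :: rest).length : ℝ≥0∞) * D := by
          show _ = σ.c + w σ.b σ.z + chainW w rest + _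
          push_cast [List.length_cons]
          ring

lemma endgame [Fintype V] (w : V → V → ℝ≥0∞) (hsymm : ∀ a b, w a b = w b a)
    (Vs : ℕ → Set V) (p : ℕ → V → V) (k i : ℕ) (hik : i + 1 ≤ k)
    (hpivot : ∀ j, 1 ≤ j → j ≤ k → ∀ v : V,
      p j v ∈ Vs j ∧ gdist w v (p j v) = ⨅ x ∈ Vs j, gdist w v x)
    (u v A B u' v' : V) (h F G : ℕ) (K Wf Wm Wb : ℝ≥0∞)
    (hKfin : K ≠ ⊤) (hWmfin : Wm ≠ ⊤)
    (hu' : u' ∈ Vs (i + 1)) (hv' : v' ∈ Vs (i + 1))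
    (hAu' : hopDist (addShortcuts w (tzHopset w Vs p k)) h A u' ≤ K)
    (hBv' : hopDist (addShortcuts w (tzHopset w Vs p k)) h B v' ≤ K)
    (hF : hopDist (addShortcuts w (tzHopset w Vs p k)) F u A ≤ Wf)
    (hG : hopDist (addShortcuts w (tzHopset w Vs p k)) G B v ≤ Wb)
    (hM : gdist w A B ≤ Wm) :
    (hopDist (addShortcuts w (tzHopset w Vs p k)) (F + h + 1 + h + G) u v ≤
        Wf + Wm + Wb + 4 * K) ∨
    (∃ T ∈ Vs (i + 1 + 1), hopDist (addShortcuts w (tzHopset w Vs p k)) (F + h + 1) u T ≤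
        Wf + Wm + 3 * K) := by
  set w' := addShortcuts w (tzHopset w Vs p k) with hw'def
  set HS := tzHopset w Vs p k with hHSdef
  have hw'symm : ∀ a b, w' a b = w' b a := addShortcuts_comm w HS hsymm
  have hlow : ∀ (β : ℕ) (x y : V), gdist w x y ≤ hopDist w' β x y :=
    fun β x y => gdist_le_hopDist_shortcut w HS β x y
  have hgu'A : gdist w u' A ≤ K := by
    rw [gdist_comm w hsymm]
    exact (hlow h A u').trans hAu'
  have hgBv' : gdist w B v' ≤ K := (hlow h B v').trans hBv'
  have hguv' : gdist w u' v' ≤ K + Wm + K := by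
    calc gdist w u' v' ≤ gdist w u' A + gdist w A v' := gdist_triangle w _ _ _
      _ ≤ gdist w u' A + (gdist w A B + gdist w B v') :=
          add_le_add_right (gdist_triangle w _ _ _) _
      _ ≤ K + (Wm + K) := add_le_add hgu'A (add_le_add hM hgBv')
      _ = K + Wm + K := by ring
  have huA : hopDist w' (F + h) u u' ≤ Wf + K :=
    (hopDist_triangle w' F h u A u').trans (add_le_add hF hAu')
  by_cases hin : u' ∈ Vs (i + 1 + 1)
  · right
    refine ⟨u', hin, ?_⟩
    calc hopDist w' (F + h + 1) u u' ≤ hopDist w' (F + h) u u' :=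
          hopDist_anti w' u u' (by omega)
      _ ≤ Wf + K := huA
      _ ≤ Wf + Wm + 3 * K := by
          calc Wf + K ≤ Wf + 3 * K := by
                refine add_le_add_right ?_ Wf
                calc K = 1 * K := (one_mul K).symm
                  _ ≤ 3 * K := mul_le_mul_left (by norm_num) K
            _ ≤ Wf + Wm + 3 * K := by
                refine add_le_add_left ?_ _
                exact le_add_right le_rfl
  · by_cases hbunch : gdist w u' v' < pivotDist w p k (i + 1 + 1) u'
    · left
      have hmem : (u', v') ∈ HS := ⟨i + 1, hik, hu', hin, Or.inl ⟨hv', hbunch⟩⟩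
      have hedge : hopDist w' 1 u' v' ≤ gdist w u' v' :=
        (hopDist_one_le w' u' v').trans (addShortcuts_le_gdist w HS u' v' (Or.inl hmem))
      have hv'B : hopDist w' h v' B ≤ K := by
        rw [hopDist_comm w' hw'symm]
        exact hBv'
      calc hopDist w' (F + h + 1 + h + G) u v
          ≤ hopDist w' (F + h + 1 + h) u B + hopDist w' G B v := hopDist_triangle w' _ _ _ _ _
        _ ≤ (hopDist w' (F + h + 1) u v' + hopDist w' h v' B) + Wb :=
            add_le_add (hopDist_triangle w' _ _ _ _ _) hG
        _ ≤ ((hopDist w' (F + h) u u' + hopDist w' 1 u' v') + K) + Wb :=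
            add_le_add_left (add_le_add (hopDist_triangle w' _ _ _ _ _) hv'B) _
        _ ≤ (((Wf + K) + (K + Wm + K)) + K) + Wb :=
            add_le_add_left (add_le_add_left (add_le_add huA (hedge.trans hguv')) _) _
        _ = Wf + Wm + Wb + 4 * K := by ring
    · right
      have hpd : pivotDist w p k (i + 1 + 1) u' ≤ gdist w u' v' := not_lt.1 hbunch
      have hfin : gdist w u' v' < ⊤ :=
        lt_of_le_of_lt hguv' (by
          rw [lt_top_iff_ne_top]
          exact fun hc => (by
            rcases ENNReal.add_eq_top.1 hc with hc1 | hc1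
            · rcases ENNReal.add_eq_top.1 hc1 with hc2 | hc2
              · exact hKfin hc2
              · exact hWmfin hc2
            · exact hKfin hc1))
      have hk2 : i + 1 + 1 ≤ k := by
        by_contra hk2
        rw [pivotDist, if_neg hk2] at hpd
        exact absurd (lt_of_le_of_lt hpd hfin) (lt_irrefl ⊤)
      obtain ⟨hTmem, -⟩ := hpivot (i + 1 + 1) (by omega) hk2 u'
      have hmem : (u', p (i + 1 + 1) u') ∈ HS :=
        ⟨i + 1, hik, hu', hin, Or.inr ⟨by omega, rfl⟩⟩
      have hgT : gdist w u' (p (i + 1 + 1) u') ≤ K + Wm + K := by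
        have : pivotDist w p k (i + 1 + 1) u' = gdist w u' (p (i + 1 + 1) u') := by
          rw [pivotDist, if_pos hk2]
        rw [← this]
        exact hpd.trans hguv'
      have hedge : hopDist w' 1 u' (p (i + 1 + 1) u') ≤ K + Wm + K :=
        ((hopDist_one_le w' _ _).trans (addShortcuts_le_gdist w HS _ _ (Or.inl hmem))).trans hgT
      refine ⟨p (i + 1 + 1) u', hTmem, ?_⟩
      calc hopDist w' (F + h + 1) u (p (i + 1 + 1) u')
          ≤ hopDist w' (F + h) u u' + hopDist w' 1 u' (p (i + 1 + 1) u') :=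
            hopDist_triangle w' _ _ _ _ _
        _ ≤ (Wf + K) + (K + Wm + K) := add_le_add huA hedge
        _ = Wf + Wm + 3 * K := by ring

end TZAux


set_option maxHeartbeats 2000000 in
open TZAux in
/-- The inductive stretch/hopbound analysis of the Thorup–Zwick-style
hopset: for every unit `μ > 0`, every `i ∈ [0,k]`, and every pair `u, v` with
`dist(u,v) ≤ r^i·μ`, either `dist^{(h_i)}_{G∪H}(u,v) ≤ dist(u,v) + ((r+4)^i − r^i)·μ`,
or some `u' ∈ V_{i+1}` satisfies `dist^{(h_i)}_{G∪H}(u,u') ≤ (r+4)^i·μ`. -/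
theorem tz_hopset_stretch_analysis
    (V : Type) [Fintype V] (w : V → V → ℝ≥0∞)
    (hsymm : ∀ u v : V, w u v = w v u) (hpos : ∀ u v : V, 0 < w u v)
    (k r : ℕ) (hk : 1 ≤ k) (hr : 2 ≤ r)
    (Vs : ℕ → Set V)
    (hV0 : Vs 0 = Set.univ) (hVlast : Vs (k + 1) = ∅)
    (hnested : ∀ i ≤ k, Vs (i + 1) ⊆ Vs i)
    (p : ℕ → V → V)
    (hpivot : ∀ i, 1 ≤ i → i ≤ k → ∀ v : V,
      p i v ∈ Vs i ∧ gdist w v (p i v) = ⨅ x ∈ Vs i, gdist w v x)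
    (μ : ℝ) (hμ : 0 < μ) :
    ∀ i ≤ k, ∀ u v : V,
      gdist w u v ≤ (r : ℝ≥0∞) ^ i * ENNReal.ofReal μ →
      (hopDist (addShortcuts w (tzHopset w Vs p k)) (hopSeq r i) u v ≤
          gdist w u v + (((r + 4) ^ i - r ^ i : ℕ) : ℝ≥0∞) * ENNReal.ofReal μ) ∨
      (∃ u' ∈ Vs (i + 1),
        hopDist (addShortcuts w (tzHopset w Vs p k)) (hopSeq r i) u u' ≤
          ((r + 4 : ℕ) : ℝ≥0∞) ^ i * ENNReal.ofReal μ) := by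
  classical
  suffices Hmain : ∀ i, i ≤ k → ∀ (μ0 : ℝ), 0 < μ0 → ∀ u v : V,
      gdist w u v ≤ (r : ℝ≥0∞) ^ i * ENNReal.ofReal μ0 →
      (hopDist (addShortcuts w (tzHopset w Vs p k)) (hopSeq r i) u v ≤
          gdist w u v + (((r + 4) ^ i - r ^ i : ℕ) : ℝ≥0∞) * ENNReal.ofReal μ0) ∨
      (∃ u' ∈ Vs (i + 1),
        hopDist (addShortcuts w (tzHopset w Vs p k)) (hopSeq r i) u u' ≤
          ((r + 4 : ℕ) : ℝ≥0∞) ^ i * ENNReal.ofReal μ0) by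
    exact fun i hi u v h => Hmain i hi μ hμ u v h
  intro i
  induction i with
  | zero =>
    intro _ μ0 hμ0 u v huv
    have hz : (((r + 4) ^ 0 - r ^ 0 : ℕ) : ℝ≥0∞) = 0 := by norm_num
    have hone : ((r + 4 : ℕ) : ℝ≥0∞) ^ 0 * ENNReal.ofReal μ0 = ENNReal.ofReal μ0 := by
      rw [pow_zero, one_mul]
    rw [pow_zero, one_mul] at huv
    by_cases h1 : u ∈ Vs 1
    · right
      refine ⟨u, h1, ?_⟩
      show hopDist _ 1 u u ≤ _
      rw [hopDist_self]
      exact zero_le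
    · by_cases h2 : gdist w u v < pivotDist w p k 1 u
      · left
        have hmem : (u, v) ∈ tzHopset w Vs p k :=
          ⟨0, Nat.zero_le k, by rw [hV0]; trivial, h1, Or.inl ⟨by rw [hV0]; trivial, h2⟩⟩
        have hb : hopDist (addShortcuts w (tzHopset w Vs p k)) 1 u v ≤ gdist w u v :=
          (hopDist_one_le _ u v).trans
            (addShortcuts_le_gdist w (tzHopset w Vs p k) u v (Or.inl hmem))
        rw [hz, zero_mul, add_zero]
        exact hb
      · right
        obtain ⟨hp1, -⟩ := hpivot 1 le_rfl hk u
        have hpd : gdist w u (p 1 u) ≤ gdist w u v := by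
          have he : pivotDist w p k 1 u = gdist w u (p 1 u) := by
            rw [pivotDist, if_pos hk]
          rw [← he]
          exact not_lt.1 h2
        have hmem : (u, p 1 u) ∈ tzHopset w Vs p k :=
          ⟨0, Nat.zero_le k, by rw [hV0]; trivial, h1, Or.inr ⟨hk, rfl⟩⟩
        refine ⟨p 1 u, hp1, ?_⟩
        rw [hone]
        show hopDist _ 1 u (p 1 u) ≤ _
        exact ((hopDist_one_le _ u (p 1 u)).trans
          (addShortcuts_le_gdist w (tzHopset w Vs p k) u (p 1 u) (Or.inl hmem))).trans
          (hpd.trans huv)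

  | succ i ih =>
    intro hik μ0 hμ0 u v huv
    have hik' : i ≤ k := by omega
    have hw's : ∀ a b, addShortcuts w (tzHopset w Vs p k) a b =
        addShortcuts w (tzHopset w Vs p k) b a := addShortcuts_comm w _ hsymm
    have hlow : ∀ (β : ℕ) (x y : V), gdist w x y ≤
        hopDist (addShortcuts w (tzHopset w Vs p k)) β x y :=
      fun β x y => gdist_le_hopDist_shortcut w _ β x y
    have hh1 : 1 ≤ hopSeq r i := hopSeq_pos r (by omega) i
    set w' := addShortcuts w (tzHopset w Vs p k) with hw'def
    set h := hopSeq r i with hhdef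
    set μ' := ENNReal.ofReal μ0 with hμ'def
    by_cases hB : ∃ u' ∈ Vs (i + 1 + 1), hopDist w' (hopSeq r (i + 1)) u u' ≤
        ((r + 4 : ℕ) : ℝ≥0∞) ^ (i + 1) * μ'
    · exact Or.inr hB
    · left
      apply ENNReal.le_of_forall_pos_le_add
      intro ε hε _
      set cD : ℕ := (r + 4) ^ i - r ^ i with hcDdef
      set cK : ℕ := (r + 4) ^ i with hcKdef
      set C : ℕ := 8 * (r + 4) ^ (i + 1) with hCdef
      have hC0 : 0 < C := by positivity
      have hεR : (0 : ℝ) < (ε : ℝ) := hε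
      have hCR : (0 : ℝ) < (C : ℝ) := by exact_mod_cast hC0
      set ν : ℝ := min ((ε : ℝ) / C) (μ0 / C) with hνdef
      have hν0 : 0 < ν := lt_min (div_pos hεR hCR) (div_pos hμ0 hCR)
      set ν' := ENNReal.ofReal ν with hν'def
      set μt : ℝ := μ0 + ν with hμtdef
      have hμt0 : 0 < μt := by positivity
      set μt' := ENNReal.ofReal μt with hμt'def
      have hsplit : μt' = μ' + ν' := ENNReal.ofReal_add hμ0.le hν0.le
      have hν'ne : ν' ≠ 0 := (ENNReal.ofReal_pos.2 hν0).ne'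
      -- smallness
      have hbaseε : (C : ℝ≥0∞) * ν' ≤ (ε : ℝ≥0∞) := by
        calc (C : ℝ≥0∞) * ν' ≤ (C : ℝ≥0∞) * ENNReal.ofReal ((ε : ℝ) / C) :=
              mul_le_mul_right (ENNReal.ofReal_le_ofReal (min_le_left _ _)) _
          _ = ENNReal.ofReal ((C : ℝ) * ((ε : ℝ) / C)) := by
              rw [ENNReal.ofReal_mul (by positivity)]
              rw [ENNReal.ofReal_natCast]
          _ = ENNReal.ofReal (ε : ℝ) := by rw [mul_div_cancel₀ _ hCR.ne']
          _ = (ε : ℝ≥0∞) := ENNReal.ofReal_coe_nnreal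
      have hbaseμ : (C : ℝ≥0∞) * ν' ≤ μ' := by
        calc (C : ℝ≥0∞) * ν' ≤ (C : ℝ≥0∞) * ENNReal.ofReal (μ0 / C) :=
              mul_le_mul_right (ENNReal.ofReal_le_ofReal (min_le_right _ _)) _
          _ = ENNReal.ofReal ((C : ℝ) * (μ0 / C)) := by
              rw [ENNReal.ofReal_mul (by positivity)]
              rw [ENNReal.ofReal_natCast]
          _ = μ' := by rw [mul_div_cancel₀ _ hCR.ne']
      set Lt := (r : ℝ≥0∞) ^ i * μt' with hLtdef
      have hLtne : Lt ≠ ⊤ :=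
        ENNReal.mul_ne_top (ENNReal.pow_ne_top (ENNReal.natCast_ne_top r)) ENNReal.ofReal_ne_top
      set D := (cD : ℝ≥0∞) * μt' with hDdef
      set K := (cK : ℝ≥0∞) * μt' with hKdef
      have hKne : K ≠ ⊤ := ENNReal.mul_ne_top (ENNReal.natCast_ne_top cK) ENNReal.ofReal_ne_top
      have hDK : D ≤ K := mul_le_mul_left (Nat.cast_le.2 (Nat.sub_le _ _)) _
      have hK4 : K ≤ 4 * K := by
        calc K = 1 * K := (one_mul K).symm
          _ ≤ 4 * K := mul_le_mul_left (by norm_num) K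
      -- IH in convenient form
      have hIH : ∀ x y : V, gdist w x y ≤ Lt →
          (hopDist w' h x y ≤ gdist w x y + D) ∨
          (∃ z ∈ Vs (i + 1), hopDist w' h x z ≤ K) := by
        intro x y hxy
        have e1 : ((r + 4 : ℕ) : ℝ≥0∞) ^ i = (cK : ℝ≥0∞) := by
          rw [hcKdef]; push_cast; ring
        have := ih hik' μt hμt0 x y hxy
        rcases this with hg | ⟨z, hz1, hz2⟩
        · exact Or.inl hg
        · exact Or.inr ⟨z, hz1, by rwa [e1] at hz2⟩
      have hbad2 : ∀ x y : V, gdist w x y ≤ Lt →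
          ¬(hopDist w' h x y ≤ gdist w x y + D) →
          (∃ z ∈ Vs (i + 1), hopDist w' h x z ≤ K) ∧
          (∃ z ∈ Vs (i + 1), hopDist w' h y z ≤ K) := by
        intro x y hxy hbad
        constructor
        · rcases hIH x y hxy with hgood | hii
          · exact absurd hgood hbad
          · exact hii
        · have hyx : gdist w y x ≤ Lt := by rwa [gdist_comm w hsymm y x]
          rcases hIH y x hyx with hgood | hii
          · exfalso
            apply hbad
            rwa [gdist_comm w hsymm y x, hopDist_comm w' hw's h y x] at hgood
          · exact hii
      -- extract a near-optimal walk
      have hgne : gdist w u v ≠ ⊤ :=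
        (lt_of_le_of_lt huv (lt_top_iff_ne_top.2 (ENNReal.mul_ne_top
          (ENNReal.pow_ne_top (ENNReal.natCast_ne_top r)) ENNReal.ofReal_ne_top))).ne
      set ε₀ := (r : ℝ≥0∞) ^ (i + 1) * ν' with hε₀def
      have hε₀ne : ε₀ ≠ 0 :=
        mul_ne_zero (pow_ne_zero _ (Nat.cast_ne_zero.2 (by omega))) hν'ne
      have hε₀top : ε₀ ≠ ⊤ :=
        ENNReal.mul_ne_top (ENNReal.pow_ne_top (ENNReal.natCast_ne_top r)) ENNReal.ofReal_ne_top
      have hlt : (⨅ β, hopDist w β u v) < gdist w u v + ε₀ :=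
        ENNReal.lt_add_right hgne hε₀ne
      obtain ⟨β, hβ⟩ := iInf_lt_iff.1 hlt
      have hβne : hopDist w β u v ≠ ⊤ :=
        (hβ.trans (lt_top_iff_ne_top.2 (fun hc => (ENNReal.add_eq_top.1 hc).elim hgne hε₀top))).ne
      obtain ⟨t, hlen, hend, hwt⟩ := exists_walk w β u v hβne
      set W := wW w u t with hWdef
      have hWlt : W < gdist w u v + ε₀ := by rw [hwt]; exact hβ
      have hWle : W ≤ (r : ℝ≥0∞) * Lt := by
        calc W ≤ gdist w u v + ε₀ := hWlt.le
          _ ≤ (r : ℝ≥0∞) ^ (i + 1) * μ' + (r : ℝ≥0∞) ^ (i + 1) * ν' := add_le_add huv le_rfl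
          _ = (r : ℝ≥0∞) ^ (i + 1) * μt' := by rw [hsplit]; ring
          _ = (r : ℝ≥0∞) * Lt := by rw [hLtdef, pow_succ]; ring
      obtain ⟨segs, cl, hOK, hclb, hclL, hWsum, hlenq⟩ := decomp w Lt hLtne r t u (by omega) hWle
      rw [hend] at hclb
      set xl := chainEnd u segs with hxldef
      -- Nat facts
      have hAB : r ^ i ≤ (r + 4) ^ i := Nat.pow_le_pow_left (by omega) i
      have hAB1 : r ^ (i + 1) ≤ (r + 4) ^ (i + 1) := Nat.pow_le_pow_left (by omega) (i + 1)
      have hNat1 : (r - 1) * cD + 4 * cK ≤ (r + 4) ^ (i + 1) - r ^ (i + 1) := by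
        rw [hcDdef, hcKdef, pow_succ, pow_succ]
        zify [hAB, Nat.mul_le_mul hAB (by omega : r ≤ r + 4),
          (by omega : 1 ≤ r)]
        nlinarith [mul_le_mul_of_nonneg_right (by push_cast; linarith : ((r : ℤ) - 1) ≤ (r : ℤ))
          (by push_cast [hAB]; linarith [(Nat.cast_le (α := ℤ)).2 hAB] :
            (0 : ℤ) ≤ ((r + 4) ^ i : ℤ) - (r ^ i : ℤ))]
      have hNat2 : r ^ (i + 1) + ((r - 1) * cD + 3 * cK) + 1 ≤ (r + 4) ^ (i + 1) := by
        rw [hcDdef, hcKdef, pow_succ, pow_succ]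
        zify [hAB, (by omega : 1 ≤ r)]
        nlinarith [mul_le_mul_of_nonneg_right (by push_cast; linarith : ((r : ℤ) - 1) ≤ (r : ℤ))
          (by push_cast [hAB]; linarith [(Nat.cast_le (α := ℤ)).2 hAB] :
            (0 : ℤ) ≤ ((r + 4) ^ i : ℤ) - (r ^ i : ℤ)),
          (Nat.one_le_iff_ne_zero.2 (pow_ne_zero i (by omega : r ≠ 0)) : 1 ≤ r ^ i)]
      have hNatC : r ^ (i + 1) + ((r - 1) * cD + 4 * cK) ≤ C := by
        rw [hcDdef, hcKdef, hCdef]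
        have h1 : (r - 1) * ((r + 4) ^ i - r ^ i) ≤ (r + 4) * (r + 4) ^ i :=
          Nat.mul_le_mul (by omega) ((Nat.sub_le _ _).trans le_rfl)
        have h2 : 4 * (r + 4) ^ i ≤ 4 * (r + 4) ^ (i + 1) :=
          Nat.mul_le_mul_left 4 (Nat.pow_le_pow_right (by omega) (by omega))
        have h3 : (r + 4) * (r + 4) ^ i = (r + 4) ^ (i + 1) := by rw [pow_succ]; ring
        omega
      -- main numeric bounds
      have NL : W + ((r - 1 : ℕ) : ℝ≥0∞) * D + 4 * K ≤
          gdist w u v + (((r + 4) ^ (i + 1) - r ^ (i + 1) : ℕ) : ℝ≥0∞) * μ' + (ε : ℝ≥0∞) := by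
        have expand : ((r - 1 : ℕ) : ℝ≥0∞) * D + 4 * K =
            (((r - 1) * cD + 4 * cK : ℕ) : ℝ≥0∞) * μt' := by
          rw [hDdef, hKdef]; push_cast; ring
        calc W + ((r - 1 : ℕ) : ℝ≥0∞) * D + 4 * K
            ≤ (gdist w u v + ε₀) + (((r - 1) * cD + 4 * cK : ℕ) : ℝ≥0∞) * μt' := by
              rw [add_assoc, expand]
              exact add_le_add hWlt.le le_rfl
          _ = gdist w u v + (((r - 1) * cD + 4 * cK : ℕ) : ℝ≥0∞) * μ' +
              ((r ^ (i + 1) + ((r - 1) * cD + 4 * cK) : ℕ) : ℝ≥0∞) * ν' := by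
              rw [hsplit, hε₀def]; push_cast; ring
          _ ≤ gdist w u v + (((r + 4) ^ (i + 1) - r ^ (i + 1) : ℕ) : ℝ≥0∞) * μ' +
              (C : ℝ≥0∞) * ν' := by
              refine add_le_add (add_le_add_right (mul_le_mul_left
                (Nat.cast_le.2 hNat1) _) _) (mul_le_mul_left (Nat.cast_le.2 hNatC) _)
          _ ≤ gdist w u v + (((r + 4) ^ (i + 1) - r ^ (i + 1) : ℕ) : ℝ≥0∞) * μ' + (ε : ℝ≥0∞) :=
              add_le_add_right hbaseε _
      have NR : W + ((r - 1 : ℕ) : ℝ≥0∞) * D + 3 * K ≤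
          ((r + 4 : ℕ) : ℝ≥0∞) ^ (i + 1) * μ' := by
        have hWle' : W ≤ ((r ^ (i + 1) : ℕ) : ℝ≥0∞) * μt' := by
          refine hWle.trans_eq ?_
          rw [hLtdef, pow_succ]; push_cast; ring
        have expand : ((r - 1 : ℕ) : ℝ≥0∞) * D + 3 * K =
            (((r - 1) * cD + 3 * cK : ℕ) : ℝ≥0∞) * μt' := by
          rw [hDdef, hKdef]; push_cast; ring
        calc W + ((r - 1 : ℕ) : ℝ≥0∞) * D + 3 * K
            ≤ ((r ^ (i + 1) + ((r - 1) * cD + 3 * cK) : ℕ) : ℝ≥0∞) * μt' := by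
              rw [add_assoc, expand]
              refine (add_le_add hWle' le_rfl).trans_eq ?_
              push_cast; ring
          _ = ((r ^ (i + 1) + ((r - 1) * cD + 3 * cK) : ℕ) : ℝ≥0∞) * μ' +
              ((r ^ (i + 1) + ((r - 1) * cD + 3 * cK) : ℕ) : ℝ≥0∞) * ν' := by
              rw [hsplit]; ring
          _ ≤ ((r ^ (i + 1) + ((r - 1) * cD + 3 * cK) : ℕ) : ℝ≥0∞) * μ' + (C : ℝ≥0∞) * ν' := by
              refine add_le_add_right (mul_le_mul_left (Nat.cast_le.2 ?_) _) _
              have := hNatC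
              omega
          _ ≤ ((r ^ (i + 1) + ((r - 1) * cD + 3 * cK) : ℕ) : ℝ≥0∞) * μ' + 1 * μ' := by
              refine add_le_add_right (hbaseμ.trans_eq (one_mul μ').symm) _
          _ = ((r ^ (i + 1) + ((r - 1) * cD + 3 * cK) + 1 : ℕ) : ℝ≥0∞) * μ' := by
              push_cast; ring
          _ ≤ ((r + 4 : ℕ) : ℝ≥0∞) ^ (i + 1) * μ' := by
              refine mul_le_mul_left ?_ _
              rw [show ((r + 4 : ℕ) : ℝ≥0∞) ^ (i + 1) = (((r + 4) ^ (i + 1) : ℕ) : ℝ≥0∞) by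
                push_cast; ring]
              exact Nat.cast_le.2 hNat2
      have hH1 : hopSeq r (i + 1) = (r + 1) * h + r := rfl
      have hcases : (hopDist w' (hopSeq r (i + 1)) u v ≤
            W + ((r - 1 : ℕ) : ℝ≥0∞) * D + 4 * K) ∨
          (∃ T ∈ Vs (i + 1 + 1), hopDist w' (hopSeq r (i + 1)) u T ≤
            W + ((r - 1 : ℕ) : ℝ≥0∞) * D + 3 * K) := by
        have hwle : ∀ a b, w' a b ≤ w a b := fun a b => addShortcuts_le_w w _ a b
        have hWne : W ≠ ⊤ :=
          (hWlt.trans (lt_top_iff_ne_top.2 (fun hc =>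
            (ENNReal.add_eq_top.1 hc).elim hgne hε₀top))).ne
        have hclne : cl ≠ ⊤ := (hclL.trans_lt (lt_top_iff_ne_top.2 hLtne)).ne
        by_cases hAll : ∀ σ ∈ segs, hopDist w' h σ.a σ.b ≤ gdist w σ.a σ.b + D
        · have front := goodChain w w' hwle Lt D h segs u hOK hAll
          by_cases hFin : hopDist w' h xl v ≤ gdist w xl v + D
          · -- all pieces good: direct chain
            left
            have comp : hopDist w' (segs.length * (h + 1) + h) u v ≤
                (chainW w segs + (segs.length : ℝ≥0∞) * D) + (cl + D) :=
              (hopDist_triangle w' _ h u xl v).trans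
                (add_le_add front (hFin.trans (add_le_add_left hclb D)))
            have hops : segs.length * (h + 1) + h ≤ hopSeq r (i + 1) := by
              rw [hH1]
              have e1 : (segs.length + 1) * (h + 1) = segs.length * (h + 1) + h + 1 := by ring
              have e3 : (segs.length + 1) * (h + 1) ≤ r * (h + 1) :=
                Nat.mul_le_mul_right _ hlenq
              have e2 : r * (h + 1) = r * h + r := by ring
              have e5 : (r + 1) * h = r * h + h := by ring
              omega
            refine (hopDist_anti w' u v hops).trans (comp.trans ?_)
            have hrsplit : ((r : ℕ) : ℝ≥0∞) = ((r - 1 : ℕ) : ℝ≥0∞) + 1 := by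
              rw [show r = (r - 1) + 1 by omega]
              push_cast
              ring
            calc (chainW w segs + (segs.length : ℝ≥0∞) * D) + (cl + D)
                = (chainW w segs + cl) + (((segs.length + 1 : ℕ)) : ℝ≥0∞) * D := by
                  push_cast; ring
              _ ≤ W + ((r : ℕ) : ℝ≥0∞) * D :=
                  add_le_add hWsum (mul_le_mul_left (Nat.cast_le.2 hlenq) _)
              _ = W + ((r - 1 : ℕ) : ℝ≥0∞) * D + D := by rw [hrsplit]; ring
              _ ≤ W + ((r - 1 : ℕ) : ℝ≥0∞) * D + 4 * K :=
                  add_le_add_right (hDK.trans hK4) _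
          · -- only the final piece is bad
            obtain ⟨⟨u', hu'1, hu'2⟩, ⟨v', hv'1, hv'2⟩⟩ := hbad2 xl v (hclb.trans hclL) hFin
            have hG0 : hopDist w' 0 v v ≤ (0 : ℝ≥0∞) := le_of_eq (hopDist_zero_self w' v)
            have EG := endgame w hsymm Vs p k i hik hpivot u v xl v u' v' h
              (segs.length * (h + 1)) 0 K (chainW w segs + (segs.length : ℝ≥0∞) * D) cl 0
              hKne hclne hu'1 hv'1 hu'2 hv'2 front hG0 hclb
            have hm : segs.length ≤ r - 1 := by omega
            have hwt : (chainW w segs + (segs.length : ℝ≥0∞) * D) + cl ≤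
                W + ((r - 1 : ℕ) : ℝ≥0∞) * D := by
              calc (chainW w segs + (segs.length : ℝ≥0∞) * D) + cl
                  = (chainW w segs + cl) + ((segs.length : ℕ) : ℝ≥0∞) * D := by push_cast; ring
                _ ≤ W + ((r - 1 : ℕ) : ℝ≥0∞) * D :=
                    add_le_add hWsum (mul_le_mul_left (Nat.cast_le.2 hm) _)
            rcases EG with hEGl | ⟨T, hT, hEGr⟩
            · left
              have hops : segs.length * (h + 1) + h + 1 + h + 0 ≤ hopSeq r (i + 1) := by
                rw [hH1]
                have e1 : (segs.length + 1) * (h + 1) = segs.length * (h + 1) + h + 1 := by ring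
                have e3 : (segs.length + 1) * (h + 1) ≤ r * (h + 1) :=
                  Nat.mul_le_mul_right _ hlenq
                have e2 : r * (h + 1) = r * h + r := by ring
                have e5 : (r + 1) * h = r * h + h := by ring
                omega
              refine (hopDist_anti w' u v hops).trans (hEGl.trans ?_)
              calc (chainW w segs + (segs.length : ℝ≥0∞) * D) + cl + 0 + 4 * K
                  = ((chainW w segs + (segs.length : ℝ≥0∞) * D) + cl) + 4 * K := by ring
                _ ≤ (W + ((r - 1 : ℕ) : ℝ≥0∞) * D) + 4 * K := add_le_add_left hwt _
            · right
              refine ⟨T, hT, ?_⟩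
              have hops : segs.length * (h + 1) + h + 1 ≤ hopSeq r (i + 1) := by
                rw [hH1]
                have e1 : (segs.length + 1) * (h + 1) = segs.length * (h + 1) + h + 1 := by ring
                have e3 : (segs.length + 1) * (h + 1) ≤ r * (h + 1) :=
                  Nat.mul_le_mul_right _ hlenq
                have e2 : r * (h + 1) = r * h + r := by ring
                have e5 : (r + 1) * h = r * h + h := by ring
                omega
              refine (hopDist_anti w' u T hops).trans (hEGr.trans ?_)
              exact add_le_add_left hwt _
        · -- some piece among the segments is bad
          obtain ⟨s₁, σa, s₂, hsegs, hs₁good, hσabad⟩ :=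
            exists_first_bad (fun σ : Seg V => hopDist w' h σ.a σ.b ≤ gdist w σ.a σ.b + D)
              segs hAll
          have hOK' := hOK
          rw [hsegs] at hOK'
          obtain ⟨hOK1, hOK2⟩ := chainOK_append w Lt u s₁ (σa :: s₂) hOK'
          have hOK2' := hOK2
          obtain ⟨hσaa, hσap, hσacLt, -⟩ := hOK2
          have front := goodChain w w' hwle Lt D h s₁ u hOK1 hs₁good
          rw [← hσaa] at front
          obtain ⟨⟨u', hu'1, hu'2⟩, -⟩ := hbad2 σa.a σa.b (hσap.trans hσacLt) hσabad
          by_cases hFin : hopDist w' h xl v ≤ gdist w xl v + D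
          · -- last bad piece is among the segments
            have hnot : ¬ ∀ σ ∈ (σa :: s₂),
                (fun σ : Seg V => hopDist w' h σ.a σ.b ≤ gdist w σ.a σ.b + D) σ :=
              fun hall => hσabad (hall σa (List.mem_cons_self))
            obtain ⟨mid, σb, s₃, hsplit2, hσbbad, hs₃good⟩ :=
              exists_last_bad _ (σa :: s₂) hnot
            have hsegs2 : segs = s₁ ++ (mid ++ σb :: s₃) := by rw [hsegs, hsplit2]
            have hOKm := hOK
            rw [hsegs2] at hOKm
            obtain ⟨-, hOKm2⟩ := chainOK_append w Lt u s₁ (mid ++ σb :: s₃) hOKm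
            obtain ⟨hOKmid, hOKb⟩ := chainOK_append w Lt _ mid (σb :: s₃) hOKm2
            obtain ⟨hσba, hσbp, hσbc, hOKs₃⟩ := hOKb
            obtain ⟨-, ⟨v', hv'1, hv'2⟩⟩ := hbad2 σb.a σb.b (hσbp.trans hσbc) hσbbad
            -- middle distance bound
            have hMid : gdist w σa.a σb.b ≤ chainW w mid + σb.c := by
              calc gdist w σa.a σb.b
                  ≤ gdist w σa.a σb.a + gdist w σb.a σb.b := gdist_triangle w _ _ _
                _ ≤ chainW w mid + σb.c := by
                    refine add_le_add ?_ hσbp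
                    rw [hσaa, hσba]
                    exact gdist_le_chain w Lt mid (chainEnd u s₁) hOKmid
            -- back bound
            have hxl2 : xl = chainEnd σb.z s₃ := by
              rw [hxldef, hsegs2, chainEnd_append, chainEnd_append]
              rfl
            have back3 := goodChain w w' hwle Lt D h s₃ σb.z hOKs₃ hs₃good
            have hedgeb : hopDist w' 1 σb.b σb.z ≤ w σb.b σb.z :=
              (hopDist_one_le w' _ _).trans (hwle _ _)
            have hBack : hopDist w' (1 + s₃.length * (h + 1) + h) σb.b v ≤
                w σb.b σb.z + (chainW w s₃ + (s₃.length : ℝ≥0∞) * D) + (cl + D) := by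
              calc hopDist w' (1 + s₃.length * (h + 1) + h) σb.b v
                  ≤ hopDist w' (1 + s₃.length * (h + 1)) σb.b xl + hopDist w' h xl v :=
                    hopDist_triangle w' _ h σb.b xl v
                _ ≤ (hopDist w' 1 σb.b σb.z +
                      hopDist w' (s₃.length * (h + 1)) σb.z xl) + (gdist w xl v + D) :=
                    add_le_add (hopDist_triangle w' 1 _ σb.b σb.z xl) hFin
                _ ≤ (w σb.b σb.z + (chainW w s₃ + (s₃.length : ℝ≥0∞) * D)) + (cl + D) := by
                    refine add_le_add (add_le_add hedgeb ?_) (add_le_add_left hclb D)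
                    rw [hxl2]
                    exact back3
                _ = w σb.b σb.z + (chainW w s₃ + (s₃.length : ℝ≥0∞) * D) + (cl + D) := by ring
            -- weight decomposition
            have hWw : chainW w segs = chainW w s₁ +
                (chainW w mid + (σb.c + w σb.b σb.z + chainW w s₃)) := by
              rw [hsegs2, chainW_append, chainW_append]
              rfl
            have hWmne : chainW w mid + σb.c ≠ ⊤ := by
              refine ne_top_of_le_ne_top hWne ?_
              refine le_trans ?_ ((self_le_add_right _ cl).trans hWsum)
              rw [hWw]
              calc chainW w mid + σb.c
                  ≤ chainW w mid + (σb.c + w σb.b σb.z + chainW w s₃) := by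
                    refine add_le_add_right ?_ _
                    exact (self_le_add_right _ _).trans (self_le_add_right _ _)
                _ ≤ chainW w s₁ + (chainW w mid + (σb.c + w σb.b σb.z + chainW w s₃)) :=
                    self_le_add_left _ _
            have EG := endgame w hsymm Vs p k i hik hpivot u v σa.a σb.b u' v' h
              (s₁.length * (h + 1)) (1 + s₃.length * (h + 1) + h) K
              (chainW w s₁ + (s₁.length : ℝ≥0∞) * D) (chainW w mid + σb.c)
              (w σb.b σb.z + (chainW w s₃ + (s₃.length : ℝ≥0∞) * D) + (cl + D))
              hKne hWmne hu'1 hv'1 hu'2 hv'2 front hBack hMid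
            have hlens : s₁.length + s₃.length + 2 ≤ r := by
              have : segs.length = s₁.length + (mid.length + (s₃.length + 1)) := by
                rw [hsegs2]
                simp [List.length_append]
              omega
            have hwt : (chainW w s₁ + (s₁.length : ℝ≥0∞) * D) + (chainW w mid + σb.c) +
                (w σb.b σb.z + (chainW w s₃ + (s₃.length : ℝ≥0∞) * D) + (cl + D)) ≤
                W + ((r - 1 : ℕ) : ℝ≥0∞) * D := by
              have e : (chainW w s₁ + (s₁.length : ℝ≥0∞) * D) + (chainW w mid + σb.c) +
                  (w σb.b σb.z + (chainW w s₃ + (s₃.length : ℝ≥0∞) * D) + (cl + D)) =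
                  (chainW w segs + cl) +
                    ((s₁.length + s₃.length + 1 : ℕ) : ℝ≥0∞) * D := by
                rw [hWw]
                push_cast
                ring
              rw [e]
              exact add_le_add hWsum (mul_le_mul_left (Nat.cast_le.2 (by omega)) _)
            rcases EG with hEGl | ⟨T, hT, hEGr⟩
            · left
              have hops : s₁.length * (h + 1) + h + 1 + h + (1 + s₃.length * (h + 1) + h) ≤
                  hopSeq r (i + 1) := by
                rw [hH1]
                have e1 : (s₁.length + s₃.length + 2) * (h + 1) =
                    s₁.length * (h + 1) + s₃.length * (h + 1) + 2 * h + 2 := by ring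
                have e3 : (s₁.length + s₃.length + 2) * (h + 1) ≤ r * (h + 1) :=
                  Nat.mul_le_mul_right _ hlens
                have e2 : r * (h + 1) = r * h + r := by ring
                have e5 : (r + 1) * h = r * h + h := by ring
                omega
              exact (hopDist_anti w' u v hops).trans (hEGl.trans (add_le_add_left hwt _))
            · right
              refine ⟨T, hT, ?_⟩
              have hops : s₁.length * (h + 1) + h + 1 ≤ hopSeq r (i + 1) := by
                rw [hH1]
                have e1 : (s₁.length + 1) * (h + 1) = s₁.length * (h + 1) + h + 1 := by ring
                have e3 : (s₁.length + 1) * (h + 1) ≤ r * (h + 1) :=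
                  Nat.mul_le_mul_right _ (by omega)
                have e2 : r * (h + 1) = r * h + r := by ring
                have e5 : (r + 1) * h = r * h + h := by ring
                omega
              refine (hopDist_anti w' u T hops).trans (hEGr.trans ?_)
              calc (chainW w s₁ + (s₁.length : ℝ≥0∞) * D) + (chainW w mid + σb.c) + 3 * K
                  ≤ (chainW w s₁ + (s₁.length : ℝ≥0∞) * D) + (chainW w mid + σb.c) +
                    (w σb.b σb.z + (chainW w s₃ + (s₃.length : ℝ≥0∞) * D) + (cl + D)) +
                    3 * K := add_le_add_left (self_le_add_right _ _) _
                _ ≤ W + ((r - 1 : ℕ) : ℝ≥0∞) * D + 3 * K := add_le_add_left hwt _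
          · -- the final piece is bad too (anchor the right side at v)
            obtain ⟨-, ⟨v', hv'1, hv'2⟩⟩ := hbad2 xl v (hclb.trans hclL) hFin
            have hMid : gdist w σa.a v ≤ chainW w (σa :: s₂) + cl := by
              calc gdist w σa.a v ≤ gdist w σa.a xl + gdist w xl v := gdist_triangle w _ _ _
                _ ≤ chainW w (σa :: s₂) + cl := by
                    refine add_le_add ?_ hclb
                    have : xl = chainEnd (chainEnd u s₁) (σa :: s₂) := by
                      rw [hxldef, hsegs, chainEnd_append]
                    rw [this, hσaa]
                    exact gdist_le_chain w Lt (σa :: s₂) (chainEnd u s₁) hOK2'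
            have hG0 : hopDist w' 0 v v ≤ (0 : ℝ≥0∞) := le_of_eq (hopDist_zero_self w' v)
            have hlen1 : s₁.length + 1 ≤ r := by
              have : segs.length = s₁.length + (s₂.length + 1) := by
                rw [hsegs]; simp [List.length_append]
              omega
            have hWmne2 : chainW w (σa :: s₂) + cl ≠ ⊤ := by
              refine ne_top_of_le_ne_top hWne ?_
              have e : chainW w segs = chainW w s₁ + chainW w (σa :: s₂) := by
                rw [hsegs, chainW_append]
              refine le_trans ?_ hWsum
              rw [e, add_assoc]
              exact self_le_add_left _ _
            have EG := endgame w hsymm Vs p k i hik hpivot u v σa.a v u' v' h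
              (s₁.length * (h + 1)) 0 K
              (chainW w s₁ + (s₁.length : ℝ≥0∞) * D) (chainW w (σa :: s₂) + cl) 0
              hKne hWmne2 hu'1 hv'1 hu'2 hv'2 front hG0 hMid
            have hwt : (chainW w s₁ + (s₁.length : ℝ≥0∞) * D) + (chainW w (σa :: s₂) + cl) + 0 ≤
                W + ((r - 1 : ℕ) : ℝ≥0∞) * D := by
              have e : (chainW w s₁ + (s₁.length : ℝ≥0∞) * D) + (chainW w (σa :: s₂) + cl) + 0 =
                  (chainW w segs + cl) + ((s₁.length : ℕ) : ℝ≥0∞) * D := by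
                rw [hsegs, chainW_append]; push_cast; ring
              rw [e]
              exact add_le_add hWsum (mul_le_mul_left (Nat.cast_le.2 (by omega)) _)
            rcases EG with hEGl | ⟨T, hT, hEGr⟩
            · left
              have hops : s₁.length * (h + 1) + h + 1 + h + 0 ≤ hopSeq r (i + 1) := by
                rw [hH1]
                have e1 : (s₁.length + 1) * (h + 1) = s₁.length * (h + 1) + h + 1 := by ring
                have e3 : (s₁.length + 1) * (h + 1) ≤ r * (h + 1) :=
                  Nat.mul_le_mul_right _ hlen1
                have e2 : r * (h + 1) = r * h + r := by ring
                have e5 : (r + 1) * h = r * h + h := by ring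
                omega
              refine (hopDist_anti w' u v hops).trans (hEGl.trans ?_)
              exact add_le_add_left hwt _
            · right
              refine ⟨T, hT, ?_⟩
              have hops : s₁.length * (h + 1) + h + 1 ≤ hopSeq r (i + 1) := by
                rw [hH1]
                have e1 : (s₁.length + 1) * (h + 1) = s₁.length * (h + 1) + h + 1 := by ring
                have e3 : (s₁.length + 1) * (h + 1) ≤ r * (h + 1) :=
                  Nat.mul_le_mul_right _ hlen1
                have e2 : r * (h + 1) = r * h + r := by ring
                have e5 : (r + 1) * h = r * h + h := by ring
                omega
              refine (hopDist_anti w' u T hops).trans (hEGr.trans ?_)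
              calc (chainW w s₁ + (s₁.length : ℝ≥0∞) * D) + (chainW w (σa :: s₂) + cl) + 3 * K
                  = ((chainW w s₁ + (s₁.length : ℝ≥0∞) * D) + (chainW w (σa :: s₂) + cl) + 0) +
                    3 * K := by rw [add_zero]
                _ ≤ W + ((r - 1 : ℕ) : ℝ≥0∞) * D + 3 * K := by
                    exact add_le_add_left hwt _
      rcases hcases with hLc | ⟨T, hT, hRc⟩
      · exact hLc.trans NL
      · exact absurd ⟨T, hT, hRc.trans NR⟩ hB
end

section
/- Let G = (V, E, w) be a weighted undirected graph with positive edge weights, and let H be the Thorup–Zwick-style hopset built from a hierarchy V = V_0 ⊇ V_1 ⊇ ⋯ ⊇ V_k ⊇ V_{k+1} = ∅ with pivots and bunches as defined below (k ≥ 1). Then for any real μ > 0 and any pair u, v ∈ V with dist_G(u, v) ≤ μ, at least one of the following holds: (i) dist_{G∪H}^{(1)}(u, v) = dist_G(u, v); (ii) there exists u' ∈ V_1 such that dist_{G∪H}^{(1)}(u, u') ≤ μ. -/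
open scoped ENNReal
open Classical

lemma gdist_le_hopDist {V : Type*} (w : V → V → ℝ≥0∞) (β : ℕ) (u v : V) :
    gdist w u v ≤ hopDist w β u v := iInf_le _ _

lemma gdist_le_w {V : Type*} (w : V → V → ℝ≥0∞) (u v : V) :
    gdist w u v ≤ w u v := by
  refine (gdist_le_hopDist w 1 u v).trans ?_
  show hopDist w 0 u v ⊓ (⨅ x, w u x + hopDist w 0 x v) ≤ w u v
  refine inf_le_right.trans ((iInf_le _ v).trans ?_)
  simp [hopDist]

lemma hopDist_one_le_w {V : Type*} (w : V → V → ℝ≥0∞) (u v : V) :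
    hopDist w 1 u v ≤ w u v := by
  show hopDist w 0 u v ⊓ (⨅ x, w u x + hopDist w 0 x v) ≤ w u v
  refine inf_le_right.trans ((iInf_le _ v).trans ?_)
  simp [hopDist]

lemma gdist_le_addShortcuts {V : Type*} (w : V → V → ℝ≥0∞) (H : Set (V × V)) (u v : V) :
    gdist w u v ≤ addShortcuts w H u v := by
  unfold addShortcuts
  refine le_inf (gdist_le_w w u v) ?_
  split_ifs
  · exact le_rfl
  · exact le_top

lemma gdist_le_hopDist_one_addShortcuts {V : Type*} (w : V → V → ℝ≥0∞)
    (H : Set (V × V)) (u v : V) :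
    gdist w u v ≤ hopDist (addShortcuts w H) 1 u v := by
  show gdist w u v ≤ hopDist (addShortcuts w H) 0 u v ⊓
    ⨅ x, addShortcuts w H u x + hopDist (addShortcuts w H) 0 x v
  refine le_inf ?_ (le_iInf fun x => ?_)
  · by_cases h : u = v
    · subst h; simpa [hopDist] using gdist_le_hopDist w 0 u u
    · simp [hopDist, h]
  · by_cases hx : x = v
    · subst hx; simpa [hopDist] using gdist_le_addShortcuts w H u x
    · simp [hopDist, hx]

/-- The base case of the stretch analysis of the Thorup–Zwick-style
hopset: for every `μ > 0` and every pair `u, v` with `dist(u,v) ≤ μ`, either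
`dist^{(1)}_{G∪H}(u,v) = dist(u,v)`, or some `u' ∈ V_1` satisfies
`dist^{(1)}_{G∪H}(u,u') ≤ μ`. -/
theorem tz_hopset_base_case
    (V : Type) [Fintype V] (w : V → V → ℝ≥0∞)
    (hsymm : ∀ u v : V, w u v = w v u) (hpos : ∀ u v : V, 0 < w u v)
    (k : ℕ) (hk : 1 ≤ k)
    (Vs : ℕ → Set V)
    (hV0 : Vs 0 = Set.univ) (hVlast : Vs (k + 1) = ∅)
    (hnested : ∀ i ≤ k, Vs (i + 1) ⊆ Vs i)
    (p : ℕ → V → V)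
    (hpivot : ∀ i, 1 ≤ i → i ≤ k → ∀ v : V,
      p i v ∈ Vs i ∧ gdist w v (p i v) = ⨅ x ∈ Vs i, gdist w v x)
    (μ : ℝ) (hμ : 0 < μ) (u v : V)
    (hd : gdist w u v ≤ ENNReal.ofReal μ) :
    hopDist (addShortcuts w (tzHopset w Vs p k)) 1 u v = gdist w u v ∨
    (∃ u' ∈ Vs 1,
      hopDist (addShortcuts w (tzHopset w Vs p k)) 1 u u' ≤ ENNReal.ofReal μ) := by
  set H := tzHopset w Vs p k with hH
  set w' := addShortcuts w H with hw'
  have h1le : ∀ a b : V, hopDist w' 1 a b ≤ w' a b := hopDist_one_le_w w'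
  by_cases hu1 : u ∈ Vs 1
  · right
    refine ⟨u, hu1, ?_⟩
    have : hopDist w' 1 u u ≤ hopDist w' 0 u u := inf_le_left
    simp only [hopDist, if_pos rfl] at this
    exact le_trans (le_trans inf_le_left (by simp [hopDist])) zero_le
  · have hu0 : u ∈ Vs 0 := by rw [hV0]; trivial
    by_cases hcmp : gdist w u v < pivotDist w p k 1 u
    · left
      have hmem : (u, v) ∈ H := ⟨0, Nat.zero_le k, hu0, hu1,
        Or.inl ⟨by rw [hV0]; trivial, hcmp⟩⟩
      have hle : w' u v ≤ gdist w u v := by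
        rw [hw']; unfold addShortcuts
        exact inf_le_right.trans (by rw [if_pos (Or.inl hmem)])
      exact le_antisymm ((h1le u v).trans hle)
        (gdist_le_hopDist_one_addShortcuts w H u v)
    · right
      push_neg at hcmp
      have hpd : pivotDist w p k 1 u = gdist w u (p 1 u) := if_pos hk
      refine ⟨p 1 u, (hpivot 1 le_rfl hk u).1, ?_⟩
      have hmem : (u, p 1 u) ∈ H := ⟨0, Nat.zero_le k, hu0, hu1,
        Or.inr ⟨hk, rfl⟩⟩
      have hle : w' u (p 1 u) ≤ gdist w u (p 1 u) := by
        rw [hw']; unfold addShortcuts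
        exact inf_le_right.trans (by rw [if_pos (Or.inl hmem)])
      calc hopDist w' 1 u (p 1 u) ≤ gdist w u (p 1 u) := (h1le _ _).trans hle
        _ = pivotDist w p k 1 u := hpd.symm
        _ ≤ gdist w u v := hcmp
        _ ≤ ENNReal.ofReal μ := hd
end
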